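/- Fix λ > 1 and define C₀(ζ) = (2λ^{-ζ/2} + λ^ζ)/3. The graphs of C₀(ζ) and C₀(ζ - 1) intersect at the unique point ζ = ξ₀ determined by λ^{3ξ₀/2} = 2λ/(√λ + 1), and moreover 1/3 < ξ₀ < 1/2. -/

import Mathlib

private lemma key15 (lam : ℝ) (hlam : 1 < lam) (ζ : ℝ) :
    ((2 * lam ^ (-ζ / 2) + lam ^ ζ) / 3 = (2 * lam ^ (-(ζ - 1) / 2) + lam ^ (ζ - 1)) / 3) ↔
    lam ^ (3 * ζ / 2) = 2 * lam / (Real.sqrt lam + 1) := by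
  have hl : (0:ℝ) < lam := lt_trans one_pos hlam
  set s := Real.sqrt lam with hs
  have hs1 : 1 < s := by
    rw [hs, show (1:ℝ) = Real.sqrt 1 by simp]
    exact Real.sqrt_lt_sqrt (by norm_num) hlam
  have hs2 : s * s = lam := Real.mul_self_sqrt hl.le
  set t := lam ^ (ζ / 2) with htdef
  have ht : 0 < t := Real.rpow_pos_of_pos hl _
  have e1 : lam ^ ζ = t * t := by
    rw [htdef, ← Real.rpow_add hl]; congr 1; ring
  have e3 : lam ^ (3 * ζ / 2) = t * t * t := by
    rw [htdef, ← Real.rpow_add hl, ← Real.rpow_add hl]; congr 1; ring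
  have e2 : lam ^ (-ζ / 2) = t⁻¹ := by
    rw [htdef, ← Real.rpow_neg hl.le]; congr 1; ring
  have e4 : lam ^ (-(ζ - 1) / 2) = s * t⁻¹ := by
    rw [hs, Real.sqrt_eq_rpow, htdef, ← Real.rpow_neg hl.le, ← Real.rpow_add hl]
    congr 1; ring
  have e5 : lam ^ (ζ - 1) = t * t / lam := by
    rw [Real.rpow_sub hl, Real.rpow_one, e1]
  rw [e1, e2, e3, e4, e5]
  have hsp : (0:ℝ) < s + 1 := by linarith
  have hs1' : s - 1 ≠ 0 := sub_ne_zero.2 (ne_of_gt hs1)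
  constructor
  · intro h
    field_simp at h
    have hc : t * t * t * (lam - 1) = 2 * lam * (s - 1) := by
      have h3t : (3:ℝ) * t ≠ 0 := by positivity
      apply mul_left_cancel₀ h3t
      linear_combination (3 * t) * h
    rw [eq_div_iff (ne_of_gt hsp)]
    apply mul_right_cancel₀ hs1'
    linear_combination hc + (t * t * t) * hs2
  · intro h
    rw [eq_div_iff (ne_of_gt hsp)] at h
    field_simp
    linear_combination (s - 1) * h - t ^ 3 * hs2

theorem stmt15 (lam : ℝ) (hlam : 1 < lam) :
    let C₀ : ℝ → ℝ := fun ζ => (2 * lam ^ (-ζ / 2) + lam ^ ζ) / 3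
    let ξ₀ : ℝ := 2 / (3 * Real.log lam) * Real.log (2 * lam / (Real.sqrt lam + 1))
    lam ^ (3 * ξ₀ / 2) = 2 * lam / (Real.sqrt lam + 1) ∧
    C₀ ξ₀ = C₀ (ξ₀ - 1) ∧
    (∀ ζ : ℝ, C₀ ζ = C₀ (ζ - 1) → ζ = ξ₀) ∧
    1 / 3 < ξ₀ ∧ ξ₀ < 1 / 2 := by
  intro C₀ ξ₀
  have hl : (0:ℝ) < lam := lt_trans one_pos hlam
  have hL : 0 < Real.log lam := Real.log_pos hlam
  set s := Real.sqrt lam with hs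
  have hs1 : 1 < s := by
    rw [hs, show (1:ℝ) = Real.sqrt 1 by simp]
    exact Real.sqrt_lt_sqrt (by norm_num) hlam
  have hs2 : s * s = lam := Real.mul_self_sqrt hl.le
  have hsp : (0:ℝ) < s + 1 := by linarith
  have hA : 0 < 2 * lam / (s + 1) := by positivity
  have h1 : lam ^ (3 * ξ₀ / 2) = 2 * lam / (s + 1) := by
    rw [Real.rpow_def_of_pos hl]
    have : Real.log lam * (3 * ξ₀ / 2) = Real.log (2 * lam / (s + 1)) := by
      show Real.log lam * (3 * (2 / (3 * Real.log lam) * Real.log (2 * lam / (s + 1))) / 2) = _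
      field_simp
    rw [this, Real.exp_log hA]
  refine ⟨h1, (key15 lam hlam ξ₀).2 h1, ?_, ?_, ?_⟩
  · intro ζ hζ
    have h2 := (key15 lam hlam ζ).1 hζ
    have h3 : lam ^ (3 * ζ / 2) = lam ^ (3 * ξ₀ / 2) := by rw [h1, h2]
    have h4 : (3 * ζ / 2) * Real.log lam = (3 * ξ₀ / 2) * Real.log lam := by
      rw [← Real.log_rpow hl, ← Real.log_rpow hl, h3]
    have := mul_right_cancel₀ (ne_of_gt hL) h4
    linarith
  · -- 1/3 < ξ₀
    have hsA : s < 2 * lam / (s + 1) := by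
      rw [lt_div_iff₀ hsp]; nlinarith
    have hlog : Real.log s < Real.log (2 * lam / (s + 1)) :=
      Real.log_lt_log (by linarith) hsA
    have hls : Real.log s = Real.log lam / 2 := Real.log_sqrt hl.le
    show (1:ℝ) / 3 < 2 / (3 * Real.log lam) * Real.log (2 * lam / (s + 1))
    rw [div_mul_eq_mul_div, lt_div_iff₀ (by positivity)]
    nlinarith
  · -- ξ₀ < 1/2
    set u := lam ^ ((1:ℝ)/4) with hu
    have hu0 : 0 < u := Real.rpow_pos_of_pos hl _
    have hu1 : 1 < u := (Real.one_lt_rpow_iff_of_pos hl).2 (Or.inl ⟨hlam, by norm_num⟩)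
    have hus : s = u * u := by
      rw [hs, Real.sqrt_eq_rpow, hu, ← Real.rpow_add hl]; norm_num
    have hul : lam = u * u * (u * u) := by
      rw [hu, ← Real.rpow_add hl, ← Real.rpow_add hl]
      norm_num
    have hAu : 2 * lam / (s + 1) < u * u * u := by
      rw [div_lt_iff₀ hsp, hus, hul]
      nlinarith [mul_pos (mul_pos (mul_pos hu0 hu0) hu0)
        (mul_pos (sub_pos.2 hu1) (sub_pos.2 hu1))]
    have hlog : Real.log (2 * lam / (s + 1)) < Real.log (u * u * u) :=
      Real.log_lt_log hA hAu
    have hlu : Real.log u = Real.log lam / 4 := by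
      rw [hu, Real.log_rpow hl]; ring
    have hlu3 : Real.log (u * u * u) = 3 * Real.log lam / 4 := by
      rw [Real.log_mul (by positivity) (by positivity),
        Real.log_mul (by positivity) (by positivity), hlu]; ring
    show 2 / (3 * Real.log lam) * Real.log (2 * lam / (s + 1)) < 1 / 2
    rw [div_mul_eq_mul_div, div_lt_iff₀ (by positivity)]
    nlinarith
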